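/- Let M = (M_n)_{n≤0} be Markov kernels on finite E, and suppose that under the independent coupling measure Q, every coalescence time T_n satisfies Q(T_n > −∞) = 1. Then there exists a strictly decreasing sequence (n_i)_{i∈ℕ} of nonpositive integers such that ∑_{i=0}^∞ (1 − β(M_{n_{i+1}, n_i})) = ∞, where β is the Dobrushin coefficient; consequently the backward products of M are weakly ergodic. -/

import Mathlib

open scoped BigOperators
open MeasureTheory ProbabilityTheory Filter
open scoped ENNReal NNReal

set_option linter.unusedSectionVars false
set_option linter.unusedTactic false
set_option maxHeartbeats 1000000

/-- Backward products `M_{n,k}`: `M_{k,k} = Id`, `M_{n-1,k} = M_n M_{n,k}`. -/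
noncomputable def backProd {E : Type*} [Fintype E] [DecidableEq E] (M : ℤ → E → E → ℝ)
    (n k : ℤ) (x x' : E) : ℝ :=
  if _h : n < k then ∑ z, M (n + 1) x z * backProd M (n + 1) k z x'
  else if x = x' then 1 else 0
termination_by (k - n).toNat
decreasing_by omega

/-- Composed random maps `Φ_{n,k} = Φ_k ∘ ⋯ ∘ Φ_{n+1}`, where `Φ_m(x) = ξ_m^x = ω m x`. -/
def PhiMap {E : Type*} (ω : ℤ → E → E) (n k : ℤ) (x : E) : E :=
  if _h : n < k then PhiMap ω (n + 1) k (ω (n + 1) x) else x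
termination_by (k - n).toNat
decreasing_by omega

/-- Dobrushin coefficient as the maximal total variation distance between rows. -/
noncomputable def dobrushin {E : Type*} [Fintype E] (K : E → E → ℝ) : ℝ :=
  ⨆ p : E × E, (1 / 2) * ∑ z, |K p.1 z - K p.2 z|

section Aux

open scoped Classical

variable {E : Type*} [Fintype E] [Nonempty E] [DecidableEq E] [MeasurableSpace E]

lemma PhiMap_self (ω : ℤ → E → E) (n : ℤ) (x : E) : PhiMap ω n n x = x := by
  rw [PhiMap]; simp

lemma PhiMap_of_lt (ω : ℤ → E → E) {n k : ℤ} (h : n < k) (x : E) :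
    PhiMap ω n k x = PhiMap ω (n + 1) k (ω (n + 1) x) := by
  rw [PhiMap]; simp [h]

lemma PhiMap_comp_aux (ω : ℤ → E → E) :
    ∀ (N : ℕ) (m' m n : ℤ), m = m' + N → m ≤ n → ∀ x,
      PhiMap ω m' n x = PhiMap ω m n (PhiMap ω m' m x) := by
  intro N
  induction N with
  | zero => intro m' m n h _ x; subst h; simp [PhiMap_self]
  | succ N ih =>
    intro m' m n h hmn x
    have h1 : m' < m := by omega
    have h2 : m' < n := by omega
    rw [PhiMap_of_lt ω h2, PhiMap_of_lt ω h1,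
      ih (m' + 1) m n (by omega) hmn (ω (m' + 1) x)]

lemma PhiMap_comp (ω : ℤ → E → E) {m' m n : ℤ} (h1 : m' ≤ m) (h2 : m ≤ n) (x : E) :
    PhiMap ω m' n x = PhiMap ω m n (PhiMap ω m' m x) :=
  PhiMap_comp_aux ω (m - m').toNat m' m n (by omega) h2 x

lemma backProd_self (M : ℤ → E → E → ℝ) (k : ℤ) (x x' : E) :
    backProd M k k x x' = if x = x' then 1 else 0 := by
  rw [backProd]; simp

lemma backProd_of_lt (M : ℤ → E → E → ℝ) {n k : ℤ} (h : n < k) (x x' : E) :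
    backProd M n k x x' = ∑ z, M (n + 1) x z * backProd M (n + 1) k z x' := by
  rw [backProd]; simp [h]

lemma backProd_nonneg (M : ℤ → E → E → ℝ) (hM0 : ∀ n x x', 0 ≤ M n x x') (n k : ℤ)
    (x x' : E) : 0 ≤ backProd M n k x x' := by
  rw [backProd]
  split
  · exact Finset.sum_nonneg fun z _ =>
      mul_nonneg (hM0 _ _ _) (backProd_nonneg M hM0 (n + 1) k z x')
  · split <;> norm_num
termination_by (k - n).toNat
decreasing_by omega

end Aux

section Aux2
open scoped Classical

variable {E : Type*} [Fintype E] [Nonempty E] [DecidableEq E] [MeasurableSpace E]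

/-- evaluation map -/
@[reducible] def fEval (p : ℤ × E) (ω : ℤ → E → E) : E := ω p.1 p.2

lemma measurable_fEval (p : ℤ × E) : Measurable (fEval (E := E) p) :=
  (measurable_pi_apply p.2).comp (measurable_pi_apply p.1)

/-- the atom of the σ-algebra containing y -/
def atomOf (E : Type*) [MeasurableSpace E] (y : E) : Set E :=
  ⋂₀ {B : Set E | MeasurableSet B ∧ y ∈ B}

lemma measurableSet_atomOf [Finite E] (y : E) : MeasurableSet (atomOf E y) :=
  MeasurableSet.sInter (Set.to_countable _) fun _ hB => hB.1

lemma mem_atomOf_self (y : E) : y ∈ atomOf E y := fun _ hB => hB.2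

lemma mem_of_mem_atomOf {y y' : E} (h : y' ∈ atomOf E y) {B : Set E}
    (hB : MeasurableSet B) (hy : y ∈ B) : y' ∈ B := h B ⟨hB, hy⟩

lemma mem_iff_of_mem_atomOf {y y' : E} (h : y' ∈ atomOf E y) {B : Set E}
    (hB : MeasurableSet B) : y ∈ B ↔ y' ∈ B := by
  constructor
  · exact fun hy => mem_of_mem_atomOf h hB hy
  · intro hy'
    by_contra hy
    exact (mem_of_mem_atomOf h hB.compl hy) hy'

lemma exists_ne_mem_atomOf {y : E} (h : ¬ MeasurableSet ({y} : Set E)) :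
    ∃ y', y' ∈ atomOf E y ∧ y' ≠ y := by
  by_contra hc
  push_neg at hc
  have : atomOf E y = {y} := by
    apply Set.eq_singleton_iff_unique_mem.2 ⟨mem_atomOf_self y, fun y' hy' => hc y' hy'⟩
  exact h (this ▸ measurableSet_atomOf y)

variable (M : ℤ → E → E → ℝ) (Q : Measure (ℤ → E → E)) [IsProbabilityMeasure Q]

/-- additivity of `Q` over fibers of a coordinate evaluation, for arbitrary finsets. -/
lemma fiber_additivity (hM0 : ∀ n x x', 0 ≤ M n x x') (hM1 : ∀ n x, ∑ x', M n x x' = 1)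
    (hmarg : ∀ (n : ℤ) (x x' : E), Q {ω | ω n x = x'} = ENNReal.ofReal (M n x x'))
    (p : ℤ × E) (B : Finset E) :
    Q (fEval p ⁻¹' ↑B) = ∑ y ∈ B, ENNReal.ofReal (M p.1 p.2 y) := by
  have hsub : ∀ C : Finset E, Q (fEval p ⁻¹' ↑C) ≤ ∑ y ∈ C, ENNReal.ofReal (M p.1 p.2 y) := by
    intro C
    have hun : fEval p ⁻¹' ↑C = ⋃ y ∈ C, {ω : ℤ → E → E | ω p.1 p.2 = y} := by
      ext ω; simp [fEval]
    rw [hun]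
    refine le_trans (measure_biUnion_finset_le C _) ?_
    exact Finset.sum_le_sum fun y _ => le_of_eq (hmarg p.1 p.2 y)
  have hne : (∑ y ∈ Bᶜ, ENNReal.ofReal (M p.1 p.2 y)) ≠ ⊤ :=
    (ENNReal.sum_lt_top.2 fun _ _ => ENNReal.ofReal_lt_top).ne
  have htot : (∑ y ∈ B, ENNReal.ofReal (M p.1 p.2 y)) +
      (∑ y ∈ Bᶜ, ENNReal.ofReal (M p.1 p.2 y)) = 1 := by
    rw [Finset.sum_add_sum_compl]
    rw [← ENNReal.ofReal_sum_of_nonneg fun y _ => hM0 p.1 p.2 y, hM1 p.1 p.2]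
    simp
  have hcover : (1 : ℝ≥0∞) ≤ Q (fEval p ⁻¹' ↑B) + Q (fEval p ⁻¹' ↑(Bᶜ)) := by
    have : (fEval p ⁻¹' ↑B) ∪ (fEval p ⁻¹' ↑(Bᶜ)) = Set.univ := by
      ext ω; simp [Finset.mem_compl]
    calc (1 : ℝ≥0∞) = Q Set.univ := (measure_univ).symm
      _ = Q ((fEval p ⁻¹' ↑B) ∪ (fEval p ⁻¹' ↑(Bᶜ))) := by rw [this]
      _ ≤ _ := measure_union_le _ _
  -- conclude
  refine le_antisymm (hsub B) ?_
  have h1 : (∑ y ∈ B, ENNReal.ofReal (M p.1 p.2 y)) +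
      (∑ y ∈ Bᶜ, ENNReal.ofReal (M p.1 p.2 y)) ≤
      Q (fEval p ⁻¹' ↑B) + (∑ y ∈ Bᶜ, ENNReal.ofReal (M p.1 p.2 y)) := by
    rw [htot]
    exact le_trans hcover (add_le_add_right (hsub Bᶜ) _)
  exact (ENNReal.add_le_add_iff_right hne).1 h1

/-- the coordinate swap map -/
def flipAt (p0 : ℤ × E) (y y' : E) (ω : ℤ → E → E) : ℤ → E → E :=
  fun n x => if n = p0.1 ∧ x = p0.2 then Equiv.swap y y' (ω n x) else ω n x

lemma flipAt_involutive (p0 : ℤ × E) (y y' : E) (ω : ℤ → E → E) :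
    flipAt p0 y y' (flipAt p0 y y' ω) = ω := by
  funext n x
  simp only [flipAt]
  by_cases h : n = p0.1 ∧ x = p0.2 <;> simp [h]

lemma swap_preimage_eq {y y' : E} (h : y' ∈ atomOf E y) {B : Set E}
    (hB : MeasurableSet B) : Equiv.swap y y' ⁻¹' B = B := by
  have hiff : y ∈ B ↔ y' ∈ B := mem_iff_of_mem_atomOf h hB
  ext z
  rcases eq_or_ne z y with rfl | hzy
  · simp [Equiv.swap_apply_left, hiff]
  · rcases eq_or_ne z y' with rfl | hzy'
    · simp [Equiv.swap_apply_right, hiff]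
    · simp [Equiv.swap_apply_of_ne_of_ne hzy hzy']

lemma flip_invariant {p0 : ℤ × E} {y y' : E} (h : y' ∈ atomOf E y)
    {H : Set (ℤ → E → E)} (hH : MeasurableSet H) :
    flipAt p0 y y' ⁻¹' H = H := by
  let π := flipAt (E := E) p0 y y'
  let m' : MeasurableSpace (ℤ → E → E) :=
    { MeasurableSet' := fun s => π ⁻¹' s = s
      measurableSet_empty := rfl
      measurableSet_compl := fun s hs => by
        show π ⁻¹' sᶜ = sᶜ
        rw [Set.preimage_compl, hs]
      measurableSet_iUnion := fun g hg => by
        show π ⁻¹' (⋃ i, g i) = ⋃ i, g i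
        rw [Set.preimage_iUnion]
        exact Set.iUnion_congr hg }
  have key : ∀ q : ℤ × E, MeasurableSpace.comap (fEval q) ‹MeasurableSpace E› ≤ m' := by
    rintro q s ⟨B, hB, rfl⟩
    show π ⁻¹' (fEval q ⁻¹' B) = fEval q ⁻¹' B
    ext ω
    simp only [Set.mem_preimage]
    have : fEval q (π ω) = if q.1 = p0.1 ∧ q.2 = p0.2 then Equiv.swap y y' (ω q.1 q.2)
        else ω q.1 q.2 := rfl
    rw [this]
    by_cases hq : q.1 = p0.1 ∧ q.2 = p0.2
    · rw [if_pos hq]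
      show ω q.1 q.2 ∈ Equiv.swap y y' ⁻¹' B ↔ ω q.1 q.2 ∈ B
      rw [swap_preimage_eq h hB]
    · rw [if_neg hq]
  have hle : (MeasurableSpace.pi : MeasurableSpace (ℤ → E → E)) ≤ m' := by
    rw [MeasurableSpace.pi]
    refine iSup_le fun n => ?_
    rw [MeasurableSpace.pi, MeasurableSpace.comap_iSup]
    refine iSup_le fun x => ?_
    rw [MeasurableSpace.comap_comp]
    exact key (n, x)
  exact hle H hH

/-- Fibers over non-measurable singletons are null. -/
lemma null_fiber (hM0 : ∀ n x x', 0 ≤ M n x x') (hM1 : ∀ n x, ∑ x', M n x x' = 1)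
    (hmarg : ∀ (n : ℤ) (x x' : E), Q {ω | ω n x = x'} = ENNReal.ofReal (M n x x'))
    (p : ℤ × E) {y : E} (hy : ¬ MeasurableSet ({y} : Set E)) :
    Q (fEval p ⁻¹' {y}) = 0 := by
  obtain ⟨y', hy'mem, hy'ne⟩ := exists_ne_mem_atomOf hy
  -- fibers as explicit sets
  have hfib : ∀ w : E, Q (fEval p ⁻¹' {w}) = ENNReal.ofReal (M p.1 p.2 w) := by
    intro w
    have : fEval p ⁻¹' {w} = {ω : ℤ → E → E | ω p.1 p.2 = w} := by ext ω; simp [fEval]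
    rw [this, hmarg]
  set H := toMeasurable Q (fEval p ⁻¹' {y'}) with hHdef
  have hHmeas : MeasurableSet H := measurableSet_toMeasurable _ _
  have hHQ : Q H = ENNReal.ofReal (M p.1 p.2 y') := by
    rw [measure_toMeasurable]; exact hfib y'
  have hsubH : fEval p ⁻¹' {y} ⊆ H := by
    intro ω hω
    have hωy : ω p.1 p.2 = y := hω
    have hπ : flipAt p y y' ω ∈ fEval p ⁻¹' {y'} := by
      show fEval p (flipAt p y y' ω) ∈ ({y'} : Set E)
      have : fEval p (flipAt p y y' ω) = Equiv.swap y y' (ω p.1 p.2) := by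
        simp [fEval, flipAt]
      rw [this, hωy, Equiv.swap_apply_left]
      rfl
    have hπH : flipAt p y y' ω ∈ H := subset_toMeasurable Q _ hπ
    rw [← flip_invariant (p0 := p) hy'mem hHmeas]
    exact hπH
  -- atom as a finset
  set A : Finset E := Finset.univ.filter (· ∈ atomOf E y) with hAdef
  have hyA : y ∈ A := by simp [hAdef, mem_atomOf_self]
  have hy'A : y' ∈ A := by simp [hAdef, hy'mem]
  have hAcoe : (↑A : Set E) = atomOf E y := by ext w; simp [hAdef]
  have hatom : Q (fEval p ⁻¹' (atomOf E y)) = ∑ w ∈ A, ENNReal.ofReal (M p.1 p.2 w) := by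
    rw [← hAcoe]; exact fiber_additivity M Q hM0 hM1 hmarg p A
  -- cover the atom preimage by H and the other fibers
  have hcover : fEval p ⁻¹' (atomOf E y) ⊆ H ∪ ⋃ w ∈ (A.erase y).erase y', fEval p ⁻¹' {w} := by
    intro ω hω
    set w := ω p.1 p.2 with hwdef
    have hwA : w ∈ A := by
      have : fEval p ω ∈ atomOf E y := hω
      simp [hAdef]; exact this
    rcases eq_or_ne w y with hwy | hwy
    · left; exact hsubH (by show fEval p ω ∈ ({y} : Set E); rw [show fEval p ω = w from rfl, hwy]; rfl)
    · rcases eq_or_ne w y' with hwy' | hwy'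
      · left
        apply subset_toMeasurable
        show fEval p ω ∈ ({y'} : Set E)
        rw [show fEval p ω = w from rfl, hwy']; rfl
      · right
        simp only [Set.mem_iUnion]
        exact ⟨w, Finset.mem_erase.2 ⟨hwy', Finset.mem_erase.2 ⟨hwy, hwA⟩⟩, rfl⟩
  have hbound : Q (fEval p ⁻¹' (atomOf E y)) ≤ ENNReal.ofReal (M p.1 p.2 y') +
      ∑ w ∈ (A.erase y).erase y', ENNReal.ofReal (M p.1 p.2 w) := by
    refine le_trans (measure_mono hcover) ?_
    refine le_trans (measure_union_le _ _) ?_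
    rw [hHQ]
    refine add_le_add_right ?_ _
    refine le_trans (measure_biUnion_finset_le _ _) ?_
    exact Finset.sum_le_sum fun w _ => le_of_eq (hfib w)
  -- expand the atom sum
  have hy'erase : y' ∈ A.erase y := Finset.mem_erase.2 ⟨hy'ne, hy'A⟩
  have hsum : ∑ w ∈ A, ENNReal.ofReal (M p.1 p.2 w) =
      ENNReal.ofReal (M p.1 p.2 y) + (ENNReal.ofReal (M p.1 p.2 y') +
        ∑ w ∈ (A.erase y).erase y', ENNReal.ofReal (M p.1 p.2 w)) := by
    rw [← Finset.add_sum_erase _ (fun w => ENNReal.ofReal (M p.1 p.2 w)) hyA,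
      ← Finset.add_sum_erase _ (fun w => ENNReal.ofReal (M p.1 p.2 w)) hy'erase]
  have hC_ne : (ENNReal.ofReal (M p.1 p.2 y') +
      ∑ w ∈ (A.erase y).erase y', ENNReal.ofReal (M p.1 p.2 w)) ≠ ⊤ := by
    refine (ENNReal.add_lt_top.2 ⟨ENNReal.ofReal_lt_top, ?_⟩).ne
    exact ENNReal.sum_lt_top.2 fun _ _ => ENNReal.ofReal_lt_top
  have hfinal : ENNReal.ofReal (M p.1 p.2 y) +
      (ENNReal.ofReal (M p.1 p.2 y') + ∑ w ∈ (A.erase y).erase y', ENNReal.ofReal (M p.1 p.2 w)) ≤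
      0 + (ENNReal.ofReal (M p.1 p.2 y') +
        ∑ w ∈ (A.erase y).erase y', ENNReal.ofReal (M p.1 p.2 w)) := by
    rw [zero_add, ← hsum, ← hatom]
    exact hbound
  have := (ENNReal.add_le_add_iff_right hC_ne).1 hfinal
  rw [hfib y]
  exact le_antisymm this zero_le

/-- σ-algebra generated by coordinates with time index `> m`. -/
def Gsig (E : Type*) [MeasurableSpace E] (m : ℤ) : MeasurableSpace (ℤ → E → E) :=
  ⨆ p ∈ {q : ℤ × E | m < q.1}, MeasurableSpace.comap (fEval p) ‹MeasurableSpace E›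

lemma Gsig_le (m : ℤ) : Gsig E m ≤ (inferInstance : MeasurableSpace (ℤ → E → E)) :=
  iSup₂_le fun p _ => measurable_iff_comap_le.1 (measurable_fEval p)

lemma Gsig_antitone {m m' : ℤ} (h : m ≤ m') : Gsig E m' ≤ Gsig E m :=
  iSup₂_le fun p hp => le_iSup₂ (f := fun (p : ℤ × E) (_ : p ∈ {q : ℤ × E | m < q.1}) =>
    MeasurableSpace.comap (fEval p) ‹MeasurableSpace E›) p (lt_of_le_of_lt h hp)

lemma comap_le_Gsig {m : ℤ} {p : ℤ × E} (hp : m < p.1) :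
    MeasurableSpace.comap (fEval p) ‹MeasurableSpace E› ≤ Gsig E m :=
  le_iSup₂ (f := fun (p : ℤ × E) (_ : p ∈ {q : ℤ × E | m < q.1}) =>
    MeasurableSpace.comap (fEval p) ‹MeasurableSpace E›) p hp

lemma indep_coord_Gsig
    (hind : iIndepFun (fun (p : ℤ × E) (ω : ℤ → E → E) => ω p.1 p.2) Q)
    {p0 : ℤ × E} {m : ℤ} (hp0 : p0.1 ≤ m) :
    Indep (MeasurableSpace.comap (fEval p0) ‹MeasurableSpace E›) (Gsig E m) Q := by
  have hdisj : Disjoint ({p0} : Set (ℤ × E)) {q : ℤ × E | m < q.1} := by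
    rw [Set.disjoint_left]
    rintro q hq hq2
    rw [Set.mem_singleton_iff] at hq
    subst hq
    exact absurd hq2 (not_lt.2 hp0)
  have hind' : iIndep (fun p : ℤ × E => MeasurableSpace.comap (fEval p) ‹MeasurableSpace E›) Q :=
    hind.iIndep
  have h := indep_iSup_of_disjoint
      (m := fun p : ℤ × E => MeasurableSpace.comap (fEval p) ‹MeasurableSpace E›)
      (fun p => measurable_iff_comap_le.1 (measurable_fEval p)) hind' hdisj
  have hsingle : (⨆ i ∈ ({p0} : Set (ℤ × E)),
      MeasurableSpace.comap (fEval i) ‹MeasurableSpace E›) =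
      MeasurableSpace.comap (fEval p0) ‹MeasurableSpace E› := by
    simp
  rwa [hsingle] at h

/-- law of the composed random map equals the backward product -/
lemma lawPhi (hM0 : ∀ n x x', 0 ≤ M n x x') (hM1 : ∀ n x, ∑ x', M n x x' = 1)
    (hmarg : ∀ (n : ℤ) (x x' : E), Q {ω | ω n x = x'} = ENNReal.ofReal (M n x x'))
    (hind : iIndepFun (fun (p : ℤ × E) (ω : ℤ → E → E) => ω p.1 p.2) Q) :
    ∀ (N : ℕ) (n k : ℤ), k = n + N → ∀ x z : E,
      ∃ T' : Set (ℤ → E → E), MeasurableSet[Gsig E n] T' ∧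
        ({ω : ℤ → E → E | PhiMap ω n k x = z} =ᵐ[Q] T') ∧
        Q T' = ENNReal.ofReal (backProd M n k x z) := by
  intro N
  induction N with
  | zero =>
    intro n k hk x z
    have hnk : n = k := by omega
    subst hnk
    by_cases hxz : x = z
    · refine ⟨Set.univ, (@MeasurableSet.univ _ (Gsig E n)), ?_, ?_⟩
      · have : {ω : ℤ → E → E | PhiMap ω n n x = z} = Set.univ := by
          ext ω; simp [PhiMap_self, hxz]
        rw [this]; exact EventuallyEq.rfl
      · rw [measure_univ, backProd_self, if_pos hxz, ENNReal.ofReal_one]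
    · refine ⟨∅, (@MeasurableSet.empty _ (Gsig E n)), ?_, ?_⟩
      · have : {ω : ℤ → E → E | PhiMap ω n n x = z} = ∅ := by
          ext ω; simp [PhiMap_self, hxz]
        rw [this]; exact EventuallyEq.rfl
      · rw [measure_empty, backProd_self, if_neg hxz, ENNReal.ofReal_zero]
  | succ N ih =>
    intro n k hk x z
    have hnk : n < k := by omega
    choose T' hT'meas hT'ae hT'Q using fun y : E => ih (n + 1) k (by omega) y z
    set D : Finset E := Finset.univ.filter (fun y => MeasurableSet ({y} : Set E)) with hD
    have hDmem : ∀ y ∈ D, MeasurableSet ({y} : Set E) := by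
      intro y hy; rw [hD] at hy; simpa using (Finset.mem_filter.1 hy).2
    have hDnotmem : ∀ y : E, y ∉ D → ¬ MeasurableSet ({y} : Set E) := by
      intro y hy hmem
      exact hy (by rw [hD]; exact Finset.mem_filter.2 ⟨Finset.mem_univ y, hmem⟩)
    set S : E → Set (ℤ → E → E) := fun y => fEval ((n + 1 : ℤ), x) ⁻¹' {y} with hS
    set T : E → Set (ℤ → E → E) := fun y => {ω | PhiMap ω (n + 1) k y = z} with hT
    have hSmem : ∀ ω : ℤ → E → E, ω ∈ S (ω (n + 1) x) := fun ω => rfl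
    have hSfib : ∀ y, Q (S y) = ENNReal.ofReal (M (n + 1) x y) := by
      intro y
      have : S y = {ω : ℤ → E → E | ω (n + 1) x = y} := by ext ω; simp [hS, fEval]
      rw [this, hmarg]
    have hSnull : ∀ y : E, y ∉ D → Q (S y) = 0 := fun y hy =>
      null_fiber M Q hM0 hM1 hmarg ((n + 1 : ℤ), x) (hDnotmem y hy)
    refine ⟨⋃ y ∈ D, S y ∩ T' y, ?_, ?_, ?_⟩
    · refine MeasurableSet.biUnion D.countable_toSet fun y hy => ?_
      refine MeasurableSet.inter ?_ ?_
      · exact comap_le_Gsig (lt_add_one n) _ ⟨{y}, hDmem y hy, rfl⟩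
      · exact Gsig_antitone (by omega) _ (hT'meas y)
    · rw [MeasureTheory.ae_eq_set]
      constructor
      · refine measure_mono_null (?_ : _ ⊆ (⋃ y ∈ Dᶜ, S y) ∪ ⋃ y ∈ D, S y ∩ (T y \ T' y)) ?_
        · intro ω hω
          obtain ⟨hωT, hωU⟩ := hω
          set y := ω (n + 1) x with hydef
          have hωTy : ω ∈ T y := by
            show PhiMap ω (n + 1) k y = z
            rw [← PhiMap_of_lt ω hnk x]
            exact hωT
          by_cases hyD : y ∈ D
          · right
            refine Set.mem_biUnion hyD ⟨hSmem ω, hωTy, ?_⟩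
            intro hωT'
            exact hωU (Set.mem_biUnion hyD ⟨hSmem ω, hωT'⟩)
          · left
            exact Set.mem_biUnion (Finset.mem_compl.2 hyD) (hSmem ω)
        · refine measure_union_null ?_ ?_
          · refine (measure_biUnion_null_iff Dᶜ.countable_toSet).2 fun y hy => ?_
            exact hSnull y (Finset.mem_compl.1 hy)
          · refine (measure_biUnion_null_iff D.countable_toSet).2 fun y _ => ?_
            refine measure_mono_null Set.inter_subset_right ?_
            exact (MeasureTheory.ae_eq_set.1 (hT'ae y)).1
      · refine measure_mono_null (?_ : _ ⊆ ⋃ y ∈ D, S y ∩ (T' y \ T y)) ?_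
        · intro ω hω
          obtain ⟨hωU, hωT⟩ := hω
          simp only [Set.mem_iUnion] at hωU
          obtain ⟨y, hyD, hySy, hyT'⟩ := hωU
          have hval : ω (n + 1) x = y := hySy
          simp only [Set.mem_iUnion]
          refine ⟨y, hyD, hySy, hyT', ?_⟩
          intro hωTy
          apply hωT
          show PhiMap ω n k x = z
          rw [PhiMap_of_lt ω hnk x, hval]
          exact hωTy
        · refine (measure_biUnion_null_iff D.countable_toSet).2 fun y _ => ?_
          refine measure_mono_null Set.inter_subset_right ?_
          exact (MeasureTheory.ae_eq_set.1 (hT'ae y)).2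
    · have hdisj : (D : Set E).PairwiseDisjoint (fun y => S y ∩ T' y) := by
        intro a _ b _ hab
        refine Set.disjoint_left.2 fun ω hωa hωb => ?_
        have ha : ω (n + 1) x = a := hωa.1
        have hb : ω (n + 1) x = b := hωb.1
        exact hab (ha ▸ hb ▸ rfl)
      rw [measure_biUnion_finset hdisj fun y hy =>
        ((measurable_fEval ((n+1 : ℤ), x)) (hDmem y hy)).inter (Gsig_le (n+1) _ (hT'meas y))]
      have hprod : ∀ y ∈ D, Q (S y ∩ T' y) =
          ENNReal.ofReal (M (n + 1) x y) * ENNReal.ofReal (backProd M (n + 1) k y z) := by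
        intro y hy
        rw [(Indep_iff _ _ Q).1 (indep_coord_Gsig Q hind (le_refl (n + 1)))
          (S y) (T' y) ⟨{y}, hDmem y hy, rfl⟩ (hT'meas y), hSfib y, hT'Q y]
      rw [Finset.sum_congr rfl hprod]
      have hext : ∑ y ∈ D, ENNReal.ofReal (M (n + 1) x y) * ENNReal.ofReal (backProd M (n + 1) k y z)
          = ∑ y : E, ENNReal.ofReal (M (n + 1) x y) * ENNReal.ofReal (backProd M (n + 1) k y z) := by
        refine Finset.sum_subset (Finset.subset_univ D) fun y _ hy => ?_
        have : ENNReal.ofReal (M (n + 1) x y) = 0 := by rw [← hSfib y]; exact hSnull y hy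
        rw [this, zero_mul]
      rw [hext]
      have : ∀ y : E, ENNReal.ofReal (M (n + 1) x y) * ENNReal.ofReal (backProd M (n + 1) k y z)
          = ENNReal.ofReal (M (n + 1) x y * backProd M (n + 1) k y z) := fun y =>
        (ENNReal.ofReal_mul (hM0 (n + 1) x y)).symm
      rw [Finset.sum_congr rfl fun y _ => this y,
        ← ENNReal.ofReal_sum_of_nonneg fun y _ =>
          mul_nonneg (hM0 (n + 1) x y) (backProd_nonneg M hM0 (n + 1) k y z),
        backProd_of_lt M hnk]

lemma lawPhi' (hM0 : ∀ n x x', 0 ≤ M n x x') (hM1 : ∀ n x, ∑ x', M n x x' = 1)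
    (hmarg : ∀ (n : ℤ) (x x' : E), Q {ω | ω n x = x'} = ENNReal.ofReal (M n x x'))
    (hind : iIndepFun (fun (p : ℤ × E) (ω : ℤ → E → E) => ω p.1 p.2) Q)
    {n k : ℤ} (h : n ≤ k) (x z : E) :
    Q {ω : ℤ → E → E | PhiMap ω n k x = z} = ENNReal.ofReal (backProd M n k x z) ∧
    ∃ T' : Set (ℤ → E → E), MeasurableSet T' ∧
      ({ω : ℤ → E → E | PhiMap ω n k x = z} =ᵐ[Q] T') := by
  obtain ⟨T', hm, hae, hQ⟩ := lawPhi M Q hM0 hM1 hmarg hind (k - n).toNat n k (by omega) x z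
  exact ⟨by rw [measure_congr hae, hQ], T', Gsig_le n _ hm, hae⟩

lemma aeeq_iUnion {α ι : Type*} [Countable ι] {m : MeasurableSpace α} {μ : Measure α}
    {s t : ι → Set α} (h : ∀ i, s i =ᵐ[μ] t i) : (⋃ i, s i) =ᵐ[μ] ⋃ i, t i := by
  rw [Filter.eventuallyEq_set]
  filter_upwards [ae_all_iff.2 fun i => Filter.eventuallyEq_set.1 (h i)] with ω hω
  simp only [Set.mem_iUnion]
  exact exists_congr hω

lemma aeeq_iInter {α ι : Type*} [Countable ι] {m : MeasurableSpace α} {μ : Measure α}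
    {s t : ι → Set α} (h : ∀ i, s i =ᵐ[μ] t i) : (⋂ i, s i) =ᵐ[μ] ⋂ i, t i := by
  rw [Filter.eventuallyEq_set]
  filter_upwards [ae_all_iff.2 fun i => Filter.eventuallyEq_set.1 (h i)] with ω hω
  simp only [Set.mem_iInter]
  exact forall_congr' hω

/-- the coalescence event -/
def coalSet {E : Type*} (n k : ℤ) : Set (ℤ → E → E) := {ω | ∃ c, ∀ u, PhiMap ω n k u = c}

lemma coalSet_mono {m' m k : ℤ} (h1 : m' ≤ m) (h2 : m ≤ k) :
    (coalSet m k : Set (ℤ → E → E)) ⊆ coalSet m' k := by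
  rintro ω ⟨c, hc⟩
  exact ⟨c, fun u => by rw [PhiMap_comp ω h1 h2 u]; exact hc _⟩

lemma coalSet_nullMeasurable (hM0 : ∀ n x x', 0 ≤ M n x x')
    (hM1 : ∀ n x, ∑ x', M n x x' = 1)
    (hmarg : ∀ (n : ℤ) (x x' : E), Q {ω | ω n x = x'} = ENNReal.ofReal (M n x x'))
    (hind : iIndepFun (fun (p : ℤ × E) (ω : ℤ → E → E) => ω p.1 p.2) Q)
    {n k : ℤ} (h : n ≤ k) :
    ∃ A' : Set (ℤ → E → E), MeasurableSet A' ∧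
      ((coalSet n k : Set (ℤ → E → E)) =ᵐ[Q] A') := by
  have hex : ∀ c u : E, ∃ T' : Set (ℤ → E → E), MeasurableSet T' ∧
      ({ω : ℤ → E → E | PhiMap ω n k u = c} =ᵐ[Q] T') :=
    fun c u => (lawPhi' M Q hM0 hM1 hmarg hind h u c).2
  choose T' hm hae using hex
  refine ⟨⋃ c, ⋂ u, T' c u,
    MeasurableSet.iUnion fun c => MeasurableSet.iInter fun u => hm c u, ?_⟩
  have h1 : (coalSet n k : Set (ℤ → E → E)) =
      ⋃ c, ⋂ u, {ω : ℤ → E → E | PhiMap ω n k u = c} := by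
    ext ω; simp [coalSet, Set.mem_iInter]
  rw [h1]
  exact aeeq_iUnion fun c => aeeq_iInter fun u => hae c u

lemma coal_large
    (hcoal : ∀ n ≤ (0 : ℤ), Q {ω : ℤ → E → E | ∃ m < n, ∃ c, ∀ x, PhiMap ω m n x = c} = 1)
    {k : ℤ} (hk : k ≤ 0) {ε : ℝ≥0∞} (hε : 0 < ε) :
    ∃ m0 < k, ∀ n ≤ m0, (1 : ℝ≥0∞) - Q (coalSet n k : Set (ℤ → E → E)) ≤ ε := by
  have hmon : Monotone (fun j : ℕ => (coalSet (k - 1 - j) k : Set (ℤ → E → E))) :=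
    fun j j' hj => coalSet_mono (by push_cast; omega) (by omega)
  have hun : (⋃ j : ℕ, (coalSet (k - 1 - j) k : Set (ℤ → E → E))) =
      {ω : ℤ → E → E | ∃ m < k, ∃ c, ∀ x, PhiMap ω m k x = c} := by
    ext ω
    constructor
    · intro hω
      obtain ⟨j, hωj⟩ := Set.mem_iUnion.1 hω
      obtain ⟨c, hc⟩ := hωj
      exact ⟨k - 1 - j, by push_cast; omega, c, hc⟩
    · rintro ⟨m, hm, c, hc⟩
      exact Set.mem_iUnion.2 ⟨(k - 1 - m).toNat,
        coalSet_mono (by rw [Int.toNat_of_nonneg (by omega)]; omega) (by omega) ⟨c, hc⟩⟩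
  have hsup : (⨆ j : ℕ, Q (coalSet (k - 1 - j) k : Set (ℤ → E → E))) = 1 := by
    rw [← Directed.measure_iUnion (hmon.directed_le), hun, hcoal k hk]
  by_cases hε1 : ε ≤ 1
  · have hlt : (1 : ℝ≥0∞) - ε < ⨆ j : ℕ, Q (coalSet (k - 1 - j) k : Set (ℤ → E → E)) := by
      rw [hsup]
      exact ENNReal.sub_lt_self ENNReal.one_ne_top one_ne_zero (ne_of_gt hε)
    obtain ⟨j, hj⟩ := lt_iSup_iff.1 hlt
    refine ⟨k - 1 - j, by have := Int.ofNat_nonneg j; omega, fun n hn => ?_⟩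
    have hQn : 1 - ε ≤ Q (coalSet n k : Set (ℤ → E → E)) :=
      le_trans hj.le (measure_mono (coalSet_mono hn (by have := Int.ofNat_nonneg j; omega)))
    calc (1 : ℝ≥0∞) - Q (coalSet n k : Set (ℤ → E → E)) ≤ 1 - (1 - ε) :=
        tsub_le_tsub_left hQn 1
      _ = ε := ENNReal.sub_sub_cancel ENNReal.one_ne_top hε1
  · push_neg at hε1
    refine ⟨k - 1, by omega, fun n hn => ?_⟩
    exact le_trans tsub_le_self hε1.le

lemma coupling_bound (hM0 : ∀ n x x', 0 ≤ M n x x') (hM1 : ∀ n x, ∑ x', M n x x' = 1)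
    (hmarg : ∀ (n : ℤ) (x x' : E), Q {ω | ω n x = x'} = ENNReal.ofReal (M n x x'))
    (hind : iIndepFun (fun (p : ℤ × E) (ω : ℤ → E → E) => ω p.1 p.2) Q)
    {n k : ℤ} (h : n ≤ k) (x x' z : E) :
    |backProd M n k x z - backProd M n k x' z| ≤
      ((1 : ℝ≥0∞) - Q (coalSet n k : Set (ℤ → E → E))).toReal := by
  obtain ⟨A', hA'm, hA'ae⟩ := coalSet_nullMeasurable M Q hM0 hM1 hmarg hind h
  have hQA : Q A' = Q (coalSet n k : Set (ℤ → E → E)) := (measure_congr hA'ae).symm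
  have hfin2 : ((1:ℝ≥0∞) - Q (coalSet n k : Set (ℤ → E → E))) ≠ ⊤ :=
    (lt_of_le_of_lt tsub_le_self ENNReal.one_lt_top).ne
  have hcompl : Q ((coalSet n k : Set (ℤ → E → E))ᶜ) ≤
      1 - Q (coalSet n k : Set (ℤ → E → E)) := by
    have hsub : (coalSet n k : Set (ℤ → E → E))ᶜ ⊆ A'ᶜ ∪ (A' \ coalSet n k) := by
      intro ω hω
      by_cases hA : ω ∈ A'
      · right; exact ⟨hA, hω⟩
      · left; exact hA
    refine le_trans (measure_mono hsub) ?_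
    refine le_trans (measure_union_le _ _) ?_
    rw [(MeasureTheory.ae_eq_set.1 hA'ae).2, add_zero, prob_compl_eq_one_sub hA'm, hQA]
  have key : ∀ a b : E, Q {ω : ℤ → E → E | PhiMap ω n k a = z} ≤
      Q {ω : ℤ → E → E | PhiMap ω n k b = z} +
        ((1:ℝ≥0∞) - Q (coalSet n k : Set (ℤ → E → E))) := by
    intro a b
    have hsub : {ω : ℤ → E → E | PhiMap ω n k a = z} ⊆
        {ω : ℤ → E → E | PhiMap ω n k b = z} ∪ (coalSet n k : Set (ℤ → E → E))ᶜ := by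
      intro ω hω
      by_cases hc : ω ∈ (coalSet n k : Set (ℤ → E → E))
      · obtain ⟨c, hcc⟩ := hc
        left
        show PhiMap ω n k b = z
        rw [hcc b, ← hcc a]; exact hω
      · right; exact hc
    exact le_trans (measure_mono hsub)
      (le_trans (measure_union_le _ _) (add_le_add_right hcompl _))
  have hreal : ∀ a b : E, backProd M n k a z ≤ backProd M n k b z +
      ((1:ℝ≥0∞) - Q (coalSet n k : Set (ℤ → E → E))).toReal := by
    intro a b
    have h1 := key a b
    rw [(lawPhi' M Q hM0 hM1 hmarg hind h a z).1,
      (lawPhi' M Q hM0 hM1 hmarg hind h b z).1] at h1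
    have hfin : (ENNReal.ofReal (backProd M n k b z) +
        ((1:ℝ≥0∞) - Q (coalSet n k : Set (ℤ → E → E)))) ≠ ⊤ :=
      ENNReal.add_ne_top.2 ⟨ENNReal.ofReal_ne_top, hfin2⟩
    have h2 := ENNReal.toReal_mono hfin h1
    rw [ENNReal.toReal_add ENNReal.ofReal_ne_top hfin2,
      ENNReal.toReal_ofReal (backProd_nonneg M hM0 n k a z),
      ENNReal.toReal_ofReal (backProd_nonneg M hM0 n k b z)] at h2
    exact h2
  rw [abs_sub_le_iff]
  constructor
  · linarith [hreal x x']
  · linarith [hreal x' x]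

lemma dobrushin_le_of_abs {K : E → E → ℝ} {r : ℝ}
    (h : ∀ x x' z, |K x z - K x' z| ≤ r) :
    dobrushin K ≤ (Fintype.card E : ℝ) * r / 2 := by
  refine ciSup_le fun p => ?_
  have h1 : ∑ z, |K p.1 z - K p.2 z| ≤ (Fintype.card E : ℝ) * r := by
    calc ∑ z, |K p.1 z - K p.2 z| ≤ ∑ _z : E, r :=
          Finset.sum_le_sum fun z _ => h p.1 p.2 z
      _ = (Fintype.card E : ℝ) * r := by
          rw [Finset.sum_const, Finset.card_univ, nsmul_eq_mul]
  rw [div_eq_mul_inv, mul_comm]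
  linarith

end Aux2


/-- If under the independent coupling every coalescence time is a.s. finite, then
there is a strictly decreasing sequence `(n_i)` of nonpositive integers with
`∑_i (1 − β(M_{n_{i+1},n_i})) = ∞`; consequently the backward products of `M`
are weakly ergodic. -/
theorem as_coalescence_implies_weak_ergodicity {E : Type*} [Fintype E] [Nonempty E]
    [DecidableEq E] [MeasurableSpace E]
    (M : ℤ → E → E → ℝ) (hM0 : ∀ n x x', 0 ≤ M n x x') (hM1 : ∀ n x, ∑ x', M n x x' = 1)
    (Q : Measure (ℤ → E → E)) [IsProbabilityMeasure Q]
    (hind : iIndepFun (fun (p : ℤ × E) (ω : ℤ → E → E) => ω p.1 p.2) Q)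
    (hmarg : ∀ (n : ℤ) (x x' : E), Q {ω | ω n x = x'} = ENNReal.ofReal (M n x x'))
    (hcoal : ∀ n ≤ (0 : ℤ), Q {ω | ∃ m < n, ∃ c, ∀ x, PhiMap ω m n x = c} = 1) :
    (∃ ns : ℕ → ℤ, StrictAnti ns ∧ (∀ i, ns i ≤ 0) ∧
      Tendsto (fun N => ∑ i ∈ Finset.range N,
        (1 - dobrushin (backProd M (ns (i + 1)) (ns i)))) atTop atTop)
    ∧ ∀ k ≤ (0 : ℤ), ∀ x x' z : E,
        Tendsto (fun n : ℤ => backProd M n k x z - backProd M n k x' z) atBot (nhds 0) := by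
  classical
  have cardpos : 0 < (Fintype.card E : ℝ) := by exact_mod_cast Fintype.card_pos
  constructor
  · -- divergence along a subsequence
    set εr : ℝ := 1 / (2 * Fintype.card E) with hεr
    have hεrpos : 0 < εr := by positivity
    have hstep : ∀ n : ℤ, n ≤ 0 → ∃ m, m < n ∧
        (1 : ℝ≥0∞) - Q (coalSet m n : Set (ℤ → E → E)) ≤ ENNReal.ofReal εr := by
      intro n hn
      obtain ⟨m0, hm0, hall⟩ := coal_large Q hcoal hn (ENNReal.ofReal_pos.2 hεrpos)
      exact ⟨m0, hm0, hall m0 le_rfl⟩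
    choose nxt hlt hQc using hstep
    let g : ℕ → {n : ℤ // n ≤ 0} := fun i => Nat.rec ⟨0, le_refl 0⟩
      (fun _ p => ⟨nxt p.1 p.2, (hlt p.1 p.2).le.trans p.2⟩) i
    refine ⟨fun i => (g i).1, ?_, fun i => (g i).2, ?_⟩
    · exact strictAnti_nat_of_succ_lt fun i => hlt (g i).1 (g i).2
    · have hterm : ∀ i : ℕ,
          (1 : ℝ) / 2 ≤ 1 - dobrushin (backProd M ((g (i + 1)).1) ((g i).1)) := by
        intro i
        have hc : (1 : ℝ≥0∞) - Q (coalSet ((g (i + 1)).1) ((g i).1) : Set (ℤ → E → E)) ≤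
            ENNReal.ofReal εr := hQc (g i).1 (g i).2
        have hle : (g (i + 1)).1 ≤ (g i).1 := (hlt (g i).1 (g i).2).le
        have habs : ∀ x x' z : E, |backProd M ((g (i + 1)).1) ((g i).1) x z -
            backProd M ((g (i + 1)).1) ((g i).1) x' z| ≤ εr := by
          intro x x' z
          refine le_trans (coupling_bound M Q hM0 hM1 hmarg hind hle x x' z) ?_
          rw [← ENNReal.toReal_ofReal hεrpos.le]
          exact ENNReal.toReal_mono ENNReal.ofReal_ne_top hc
        have hdob := dobrushin_le_of_abs habs
        have hq : (Fintype.card E : ℝ) * εr / 2 = 1 / 4 := by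
          rw [hεr]
          field_simp
          ring
        rw [hq] at hdob
        linarith
      refine tendsto_atTop_mono (fun N => ?_)
        (Tendsto.atTop_mul_const (by norm_num : (0:ℝ) < 1/2) tendsto_natCast_atTop_atTop)
      calc (N : ℝ) * (1 / 2) = ∑ _i ∈ Finset.range N, (1 : ℝ) / 2 := by
            rw [Finset.sum_const, Finset.card_range, nsmul_eq_mul]
        _ ≤ ∑ i ∈ Finset.range N, (1 - dobrushin (backProd M ((g (i + 1)).1) ((g i).1))) :=
            Finset.sum_le_sum fun i _ => hterm i
  · -- weak ergodicity
    intro k hk x x' z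
    rw [NormedAddCommGroup.tendsto_nhds_zero]
    intro ε hε
    have hε2 : (0 : ℝ) < ε / 2 := by positivity
    obtain ⟨m0, hm0k, hall⟩ := coal_large Q hcoal hk (ENNReal.ofReal_pos.2 hε2)
    rw [eventually_atBot]
    refine ⟨m0, fun n hn => ?_⟩
    have hnk : n ≤ k := by omega
    have h1 := coupling_bound M Q hM0 hM1 hmarg hind hnk x x' z
    have h2 : ((1 : ℝ≥0∞) - Q (coalSet n k : Set (ℤ → E → E))).toReal ≤ ε / 2 := by
      rw [← ENNReal.toReal_ofReal hε2.le]
      exact ENNReal.toReal_mono ENNReal.ofReal_ne_top (hall n hn)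
    rw [Real.norm_eq_abs]
    exact lt_of_le_of_lt (h1.trans h2) (by linarith)
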